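/- Let C be a category with all finite limits and colimits, let F : C ⥤ D be a functor with a right adjoint G : D ⥤ C whose counit is a natural isomorphism, and let η denote the unit of the adjunction. Let W = {f | F.map f is an isomorphism}. Assume condition (b): for every morphism f : A ⟶ B of C, the canonical morphism from A to the pullback of G.map (F.map f) : G(F A) ⟶ G(F B) along η_B : B ⟶ G(F B), induced by f and η_A, lies in W. Then the triple with weak equivalences W, cofibrations all morphisms of C, and fibrations W.rlp is a model structure on C. -/

import Mathlib

open CategoryTheory CategoryTheory.Limits

universe v₁ v₂ u₁ u₂

section Preliminaries

variable {C : Type u₁} [Category.{v₁} C]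

/-- The right lifting class of a class of morphisms. -/
def MorphismPropertyRLP (S : MorphismProperty C) : MorphismProperty C :=
  fun _ _ g => ∀ ⦃A B : C⦄ (f : A ⟶ B), S f → HasLiftingProperty f g

/-- The left lifting class of a class of morphisms. -/
def MorphismPropertyLLP (S : MorphismProperty C) : MorphismProperty C :=
  fun _ _ f => ∀ ⦃X Y : C⦄ (g : X ⟶ Y), S g → HasLiftingProperty f g

/-- `(L, R)` is a weak factorization system. -/
structure IsWFS (L R : MorphismProperty C) : Prop where
  llp_eq : L = MorphismPropertyLLP R
  rlp_eq : R = MorphismPropertyRLP L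
  factor : ∀ ⦃X Y : C⦄ (f : X ⟶ Y),
    ∃ (Z : C) (l : X ⟶ Z) (r : Z ⟶ Y), L l ∧ R r ∧ l ≫ r = f

/-- The two-out-of-three property for a class of morphisms. -/
def TwoOfThree (W : MorphismProperty C) : Prop :=
  ∀ ⦃X Y Z : C⦄ (f : X ⟶ Y) (g : Y ⟶ Z),
    (W f → W g → W (f ≫ g)) ∧ (W f → W (f ≫ g) → W g) ∧ (W g → W (f ≫ g) → W f)

/-- `(W, Cof, Fib)` is a model structure. -/
structure IsModelStructure (W Cof Fib : MorphismProperty C) : Prop where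
  twoOfThree : TwoOfThree W
  wfs₁ : IsWFS Cof (fun _ _ f => Fib f ∧ W f)
  wfs₂ : IsWFS (fun _ _ f => Cof f ∧ W f) Fib

end Preliminaries

section Aux
variable {C : Type u₁} [Category.{v₁} C] {D : Type u₂} [Category.{v₂} D]
  (F : C ⥤ D) (G : D ⥤ C)

lemma hlp_Gmap (adj : F ⊣ G) {A B : C} {X Y : D} (w : A ⟶ B) [IsIso (F.map w)] (h : X ⟶ Y) :
    HasLiftingProperty w (G.map h) := by
  constructor
  intro u v sq
  refine ⟨⟨⟨adj.homEquiv _ _ (inv (F.map w) ≫ (adj.homEquiv _ _).symm u), ?_, ?_⟩⟩⟩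
  · rw [← Adjunction.homEquiv_naturality_left, ← Category.assoc, IsIso.hom_inv_id,
      Category.id_comp, Equiv.apply_symm_apply]
  · rw [← Adjunction.homEquiv_naturality_right]
    apply (adj.homEquiv _ _).symm.injective
    rw [Equiv.symm_apply_apply, Category.assoc, ← Adjunction.homEquiv_naturality_right_symm,
      sq.w, Adjunction.homEquiv_naturality_left_symm, IsIso.inv_hom_id_assoc]

lemma isIso_of_selfLift {X Y : C} (g : X ⟶ Y) (h : HasLiftingProperty g g) : IsIso g := by
  have sq : CommSq (𝟙 X) g g (𝟙 Y) := ⟨by simp⟩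
  exact ⟨sq.lift, sq.fac_left, sq.fac_right⟩
end Aux


/-- Given an adjunction `F ⊣ G` with invertible counit, if for every `f : A ⟶ B` the
canonical map `A ⟶ B ×_{GFB} GFA` is inverted by `F`, then `C` carries a model
structure whose weak equivalences are the morphisms inverted by `F`, whose
cofibrations are all morphisms, and whose fibrations are the right lifting class of
the weak equivalences. -/
theorem modelStructure_of_adjoint_section
    {C : Type u₁} [Category.{v₁} C] {D : Type u₂} [Category.{v₂} D]
    [HasFiniteLimits C] [HasFiniteColimits C]
    (F : C ⥤ D) (G : D ⥤ C) (adj : F ⊣ G) [IsIso adj.counit]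
    (W : MorphismProperty C) (hW : W = fun _ _ f => IsIso (F.map f))
    (hb : ∀ ⦃A B : C⦄ (f : A ⟶ B),
      W (pullback.lift f (adj.unit.app A)
          (by simp :
            f ≫ adj.unit.app B = adj.unit.app A ≫ G.map (F.map f)))) :
    IsModelStructure W (fun _ _ _ => True) (MorphismPropertyRLP W) := by
  subst hW
  -- factorization
  have factor : ∀ ⦃X Y : C⦄ (f : X ⟶ Y), ∃ (Z : C) (l : X ⟶ Z) (r : Z ⟶ Y),
      IsIso (F.map l) ∧ MorphismPropertyRLP (fun _ _ f => IsIso (F.map f)) r ∧ l ≫ r = f := by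
    intro X Y f
    refine ⟨pullback (adj.unit.app Y) (G.map (F.map f)),
      pullback.lift f (adj.unit.app X) (by simp), pullback.fst _ _, hb f, ?_, pullback.lift_fst _ _ _⟩
    intro A B w hw
    haveI : IsIso (F.map w) := hw
    haveI : HasLiftingProperty w (G.map (F.map f)) := hlp_Gmap F G adj w (F.map f)
    constructor
    intro u v sq
    have sq2 : CommSq (u ≫ pullback.snd _ _) w (G.map (F.map f)) (v ≫ adj.unit.app Y) := ⟨by
      rw [Category.assoc, ← pullback.condition, ← Category.assoc, sq.w, Category.assoc]⟩
    refine ⟨⟨⟨pullback.lift v sq2.lift sq2.fac_right.symm, ?_, ?_⟩⟩⟩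
    · apply pullback.hom_ext
      · rw [Category.assoc]; erw [pullback.lift_fst]; exact sq.w.symm
      · rw [Category.assoc]; erw [pullback.lift_snd]; exact sq2.fac_left
    · exact pullback.lift_fst _ _ _
  refine ⟨?_, ⟨?_, ?_, ?_⟩, ⟨?_, ?_, ?_⟩⟩
  -- two out of three
  · intro X Y Z f g
    refine ⟨fun hf hg => ?_, fun hf hfg => ?_, fun hg hfg => ?_⟩
    · haveI : IsIso (F.map f) := hf; haveI : IsIso (F.map g) := hg
      show IsIso (F.map (f ≫ g)); rw [F.map_comp]; infer_instance
    · haveI : IsIso (F.map f) := hf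
      have hfg' : IsIso (F.map f ≫ F.map g) := by rw [← F.map_comp]; exact hfg
      exact IsIso.of_isIso_comp_left (F.map f) (F.map g)
    · haveI : IsIso (F.map g) := hg
      have hfg' : IsIso (F.map f ≫ F.map g) := by rw [← F.map_comp]; exact hfg
      exact IsIso.of_isIso_comp_right (F.map f) (F.map g)
  -- wfs₁ : llp_eq
  · funext X Y f
    apply propext
    constructor
    · intro _ X' Y' g hg
      haveI : IsIso g := isIso_of_selfLift g (hg.1 g hg.2)
      infer_instance
    · intro _; trivial
  -- wfs₁ : rlp_eq
  · funext X Y g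
    apply propext
    constructor
    · rintro ⟨h1, h2⟩ A B f _
      haveI : IsIso g := isIso_of_selfLift g (h1 g h2)
      infer_instance
    · intro h
      haveI : IsIso g := isIso_of_selfLift g (h g trivial)
      exact ⟨fun A B f _ => inferInstance, inferInstance⟩
  -- wfs₁ : factor
  · intro X Y f
    refine ⟨Y, f, 𝟙 Y, trivial, ⟨fun A B w _ => inferInstance, inferInstance⟩, by simp⟩
  -- wfs₂ : llp_eq
  · funext X Y f
    apply propext
    constructor
    · rintro ⟨_, hw⟩ X' Y' g hg
      exact hg f hw
    · intro h
      refine ⟨trivial, ?_⟩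
      obtain ⟨Z, l, r, hl, hr, hlr⟩ := factor f
      haveI : HasLiftingProperty f r := h r hr
      have sq : CommSq l f r (𝟙 Y) := ⟨by rw [hlr, Category.comp_id]⟩
      have h1 : inv (F.map l) ≫ F.map f = F.map r := by
        rw [IsIso.inv_comp_eq, ← F.map_comp, hlr]
      refine ⟨F.map sq.lift ≫ inv (F.map l), ?_, ?_⟩
      · rw [← Category.assoc, ← F.map_comp, sq.fac_left, IsIso.hom_inv_id]
      · rw [Category.assoc, h1, ← F.map_comp, sq.fac_right, F.map_id]
  -- wfs₂ : rlp_eq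
  · funext X Y g
    apply propext
    constructor
    · intro h A B f hf
      exact h f hf.2
    · intro h A B f hf
      exact h f ⟨trivial, hf⟩
  -- wfs₂ : factor
  · intro X Y f
    obtain ⟨Z, l, r, hl, hr, hlr⟩ := factor f
    exact ⟨Z, l, r, ⟨trivial, hl⟩, hr, hlr⟩
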